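/- Fix a commutative ring R and an R-module A, and let μ be a 2-cochain which is associative, i.e. μ(μ(a,b),c) = μ(a,μ(b,c)) for all a, b, c ∈ A. With ∘ the graded circle product, define for each p-cochain f the (p+1)-cochain ∂f := f∘μ − (−1)^{p−1} μ∘f. Then ∂ is a differential: ∂(∂f) = 0 for every p-cochain f. -/

import Mathlib

/-- Partial (insertion) composition `f ∘ᵢ g` of a `p`-cochain `f` with a `q`-cochain `g`
at the (1-based) slot `i`, producing an `n`-cochain where `n + 1 = p + q`
(i.e. `n = p + q - 1`).  Explicitly
`(f ∘ᵢ g)(a₁,…,aₙ) = f(a₁,…,a_{i−1}, g(aᵢ,…,a_{i+q−1}), a_{i+q},…,aₙ)`. -/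
def pcomp {A : Type*} {p q n : ℕ} (hq : 1 ≤ q) (hn : n + 1 = p + q)
    (f : (Fin p → A) → A) (g : (Fin q → A) → A) (i : ℕ) :
    (Fin n → A) → A := fun a =>
  f fun k =>
    if k.val + 1 < i then a ⟨k.val, by have hk := k.isLt; omega⟩
    else if k.val + 1 = i then
      g fun l => a ⟨k.val + l.val, by have hk := k.isLt; have hl := l.isLt; omega⟩
    else a ⟨k.val + q - 1, by have hk := k.isLt; omega⟩

/-- The graded circle (insertion) product of a `p`-cochain `f` and a `q`-cochain `g`:
`f∘g = Σ_{i=1}^{p} (−1)^{(i−1)(q+1)} f ∘ᵢ g`, a `(p+q-1)`-cochain. -/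
def gcirc {A : Type*} [AddCommGroup A] {p q n : ℕ} (hq : 1 ≤ q) (hn : n + 1 = p + q)
    (f : (Fin p → A) → A) (g : (Fin q → A) → A) : (Fin n → A) → A :=
  fun a => ∑ i ∈ Finset.Icc 1 p, ((-1 : ℤ) ^ ((i - 1) * (q + 1))) • pcomp hq hn f g i a

/-- Gerstenhaber's operadically defined differential with respect to a 2-cochain `μ`:
`∂f := f∘μ − (−1)^{p−1} μ∘f`, a `(p+1)`-cochain. -/
def hdel {A : Type*} [AddCommGroup A] {p : ℕ} (hp : 1 ≤ p)
    (μ : (Fin 2 → A) → A) (f : (Fin p → A) → A) : (Fin (p + 1) → A) → A :=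
  gcirc (show (1 : ℕ) ≤ 2 by omega) (show p + 1 + 1 = p + 2 by omega) f μ
    - ((-1 : ℤ) ^ (p - 1)) • gcirc hp (show p + 1 + 1 = 2 + p by omega) μ f

theorem pcomp_pcomp_of_lt {A : Type*} {p q r m m' n : ℕ} (hq : 1 ≤ q) (hr : 1 ≤ r)
    (hm : m + 1 = p + q) (hn : n + 1 = m + r)
    (hm' : m' + 1 = p + r) (hn' : n + 1 = m' + q)
    (f : (Fin p → A) → A) (g : (Fin q → A) → A) (h : (Fin r → A) → A)
    {i j : ℕ} (h1i : 1 ≤ i) (hij : i < j) (hjp : j ≤ p) :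
    pcomp hr hn (pcomp hq hm f g j) h i = pcomp hq hn' (pcomp hr hm' f h i) g (j + r - 1) := by
  funext a
  simp only [pcomp]
  refine congrArg f (funext fun k => ?_)
  have hk := k.isLt
  split_ifs <;>
    first
      | rfl
      | omega
      | exact congrArg a (by simp only [Fin.mk.injEq]; omega)
      | (refine congrArg _ (funext fun l => ?_);
         have hl := l.isLt;
         split_ifs <;>
           first
             | rfl
             | omega
             | exact congrArg a (by simp only [Fin.mk.injEq]; omega))

theorem pcomp_pcomp_nested {A : Type*} {p q r m n w : ℕ} (hq : 1 ≤ q) (hr : 1 ≤ r) (hw1 : 1 ≤ w)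
    (hm : m + 1 = p + q) (hn : n + 1 = m + r)
    (hw : w + 1 = q + r) (hn2 : n + 1 = p + w)
    (f : (Fin p → A) → A) (g : (Fin q → A) → A) (h : (Fin r → A) → A)
    {i j : ℕ} (h1j : 1 ≤ j) (hji : j ≤ i) (hiq : i ≤ j + q - 1) (hjp : j ≤ p) :
    pcomp hr hn (pcomp hq hm f g j) h i = pcomp hw1 hn2 f (pcomp hr hw g h (i - j + 1)) j := by
  funext a
  simp only [pcomp]
  refine congrArg f (funext fun k => ?_)
  have hk := k.isLt
  split_ifs <;>
    first
      | rfl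
      | omega
      | exact congrArg a (by simp only [Fin.mk.injEq]; omega)
      | (refine congrArg _ (funext fun l => ?_);
         have hl := l.isLt;
         split_ifs <;>
           first
             | rfl
             | omega
             | exact congrArg a (by simp only [Fin.mk.injEq]; omega)
             | (refine congrArg _ (funext fun l2 => ?_);
                have hl2 := l2.isLt;
                first
                  | exact congrArg a (by simp only [Fin.mk.injEq]; omega)
                  | (split_ifs <;>
                      first
                        | rfl
                        | omega
                        | exact congrArg a (by simp only [Fin.mk.injEq]; omega))))

section mu
variable {R A : Type*} [CommRing R] [AddCommGroup A] [Module R A]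
  (μ : MultilinearMap R (fun _ : Fin 2 => A) A)

theorem update_pair_zero (x y z : A) : Function.update ![x, y] 0 z = ![z, y] := by
  funext j; fin_cases j <;> simp [Function.update]

theorem update_pair_one (x y z : A) : Function.update ![x, y] 1 z = ![x, z] := by
  funext j; fin_cases j <;> simp [Function.update]

/-- `x ↦ μ ![x, y]` as an `AddMonoidHom`. -/
def muHomL (y : A) : A →+ A :=
  AddMonoidHom.mk' (fun x => μ ![x, y]) (fun x x' => by
    have := μ.map_update_add ![x, y] 0 x x'
    rwa [update_pair_zero, update_pair_zero, update_pair_zero] at this)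

/-- `y ↦ μ ![x, y]` as an `AddMonoidHom`. -/
def muHomR (x : A) : A →+ A :=
  AddMonoidHom.mk' (fun y => μ ![x, y]) (fun y y' => by
    have := μ.map_update_add ![x, y] 1 y y'
    rwa [update_pair_one, update_pair_one, update_pair_one] at this)

@[simp] theorem muHomL_apply (y x : A) : muHomL μ y x = μ ![x, y] := rfl
@[simp] theorem muHomR_apply (x y : A) : muHomR μ x y = μ ![x, y] := rfl

theorem pcomp_mu_one {q n : ℕ} (hq : 1 ≤ q) (hn : n + 1 = 2 + q)
    (g : (Fin q → A) → A) (a : Fin n → A) :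
    pcomp hq hn (⇑μ) g 1 a
      = muHomL μ (a ⟨q, by omega⟩) (g fun l => a ⟨l.val, by have := l.isLt; omega⟩) := by
  simp only [pcomp, muHomL_apply]
  refine congrArg _ (funext fun k => ?_)
  fin_cases k <;> simp <;>
    first
      | exact congrArg a (by simp only [Fin.mk.injEq]; omega)
      | exact congrArg g (funext fun l => congrArg a (by simp only [Fin.mk.injEq]; omega))

theorem pcomp_mu_two {q n : ℕ} (hq : 1 ≤ q) (hn : n + 1 = 2 + q)
    (g : (Fin q → A) → A) (a : Fin n → A) :
    pcomp hq hn (⇑μ) g 2 a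
      = muHomR μ (a ⟨0, by omega⟩) (g fun l => a ⟨1 + l.val, by have := l.isLt; omega⟩) := by
  simp only [pcomp, muHomR_apply]
  refine congrArg _ (funext fun k => ?_)
  fin_cases k <;> simp <;>
    first
      | exact congrArg a (by simp only [Fin.mk.injEq]; omega)
      | exact congrArg g (funext fun l => congrArg a (by simp only [Fin.mk.injEq]; omega))

theorem massoc (hassoc : ∀ a b c : A, μ ![μ ![a, b], c] = μ ![a, μ ![b, c]])
    (h2 : (1:ℕ) ≤ 2) (h3 : 3 + 1 = 2 + 2) :
    pcomp h2 h3 (⇑μ) (⇑μ) 1 = pcomp h2 h3 (⇑μ) (⇑μ) 2 := by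
  funext a
  rw [pcomp_mu_one, pcomp_mu_two, muHomL_apply, muHomR_apply]
  have h := hassoc (a ⟨0, by omega⟩) (a ⟨1, by omega⟩) (a ⟨2, by omega⟩)
  refine (congrArg μ ?_).trans (h.trans (congrArg μ ?_))
  · funext j
    fin_cases j <;> simp
    exact congrArg μ (funext fun l => by fin_cases l <;> simp <;> exact congrArg a (by simp only [Fin.mk.injEq]; omega))
  · funext j
    fin_cases j <;> simp
    exact congrArg μ (funext fun l => by fin_cases l <;> simp <;> exact congrArg a (by simp only [Fin.mk.injEq]; omega))

end mu

theorem smul_pow_parity {M : Type*} [AddCommGroup M] {e e' : ℕ} (h : e % 2 = e' % 2) (x : M) :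
    ((-1:ℤ)^e) • x = ((-1:ℤ)^e') • x := by
  have : ((-1:ℤ))^e = (-1)^e' := by
    rw [← Nat.div_add_mod e 2, ← Nat.div_add_mod e' 2, pow_add, pow_add, pow_mul, pow_mul, h]
    norm_num
  rw [this]

theorem sum_Icc_one_two {M : Type*} [AddCommMonoid M] (F : ℕ → M) :
    ∑ k ∈ Finset.Icc 1 2, F k = F 1 + F 2 := by
  rw [show Finset.Icc 1 2 = ({1, 2} : Finset ℕ) from rfl]
  rw [Finset.sum_insert (by decide), Finset.sum_singleton]

theorem keyA {M : Type*} [AddCommGroup M] (p : ℕ) (T1 : ℕ → ℕ → M)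
    (h11 : ∀ i j, 1 ≤ i → i < j → j ≤ p → T1 i j = T1 (j+1) i)
    (h12 : ∀ j, 1 ≤ j → j ≤ p → T1 j j = T1 (j+1) j) :
    ∑ x ∈ (Finset.Icc 1 (p+1)) ×ˢ (Finset.Icc 1 p), ((-1:ℤ)^(x.1+x.2)) • T1 x.1 x.2 = 0 := by
  refine Finset.sum_involution
    (fun x _ => if x.1 ≤ x.2 then (x.2+1, x.1) else (x.2, x.1-1)) ?_ ?_ ?_ ?_
  · rintro ⟨i, j⟩ hx
    simp only [Finset.mem_product, Finset.mem_Icc] at hx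
    by_cases hij : i ≤ j
    · simp only [hij, if_pos]
      have hT : T1 (j+1) i = T1 i j := by
        rcases eq_or_lt_of_le hij with h | h
        · subst h; exact (h12 i hx.1.1 (by omega)).symm
        · exact (h11 i j hx.1.1 h (by omega)).symm
      rw [hT, smul_pow_parity (e := j+1+i) (e' := i+j+1) (by omega), ← add_smul]
      have : ((-1:ℤ))^(i+j) + (-1)^(i+j+1) = 0 := by rw [pow_succ]; ring
      rw [this, zero_smul]
    · simp only [hij, if_neg, not_false_iff]
      have hT : T1 j (i-1) = T1 i j := by
        rcases (by omega : j = i - 1 ∨ j < i - 1) with h | h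
        · have h2 : T1 j (i-1) = T1 (j+1) j := by rw [← h]; exact h12 j hx.2.1 hx.2.2
          rw [h2]; congr 1; omega
        · have := h11 j (i-1) hx.2.1 h (by omega)
          rw [this]; congr 2 <;> omega
      rw [hT, smul_pow_parity (e := j+(i-1)) (e' := i+j+1) (by omega), ← add_smul]
      have : ((-1:ℤ))^(i+j) + (-1)^(i+j+1) = 0 := by rw [pow_succ]; ring
      rw [this, zero_smul]
  · rintro ⟨i, j⟩ hx hne
    by_cases hij : i ≤ j <;> simp [hij, Prod.ext_iff] <;> omega
  · rintro ⟨i, j⟩ hx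
    simp only [Finset.mem_product, Finset.mem_Icc] at hx ⊢
    by_cases hij : i ≤ j <;> simp [hij] <;> omega
  · rintro ⟨i, j⟩ hx
    simp only [Finset.mem_product, Finset.mem_Icc] at hx
    by_cases hij : i ≤ j
    · simp only [hij, if_pos]
      have : ¬ (j + 1 ≤ i) := by omega
      simp [this]
    · simp only [hij, if_neg, not_false_iff]
      have : j ≤ i - 1 := by omega
      simp [this]; omega

theorem key {M : Type*} [AddCommGroup M] (p : ℕ) (hp : 1 ≤ p)
    (T1 T2 T3 T4 : ℕ → ℕ → M)
    (h11 : ∀ i j, 1 ≤ i → i < j → j ≤ p → T1 i j = T1 (j+1) i)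
    (h12 : ∀ j, 1 ≤ j → j ≤ p → T1 j j = T1 (j+1) j)
    (h23 : ∀ i, 1 ≤ i → i ≤ p → T3 1 i = T2 1 i)
    (h23' : ∀ i, 1 ≤ i → i ≤ p → T3 2 (i+1) = T2 2 i)
    (hx1 : T3 1 (p+1) = T4 1 1)
    (hy : T3 2 1 = T4 2 2)
    (hz : T4 1 2 = T4 2 1) :
    (∑ i ∈ Finset.Icc 1 (p+1), (-1:ℤ)^((i-1)*3) •
        ((∑ j ∈ Finset.Icc 1 p, (-1:ℤ)^((j-1)*3) • T1 i j)
          - (-1:ℤ)^(p-1) • (∑ k ∈ Finset.Icc 1 2, (-1:ℤ)^((k-1)*(p+1)) • T3 k i)))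
      - (-1:ℤ)^p •
        ((-1:ℤ)^((1-1)*(p+2)) • ((∑ j ∈ Finset.Icc 1 p, (-1:ℤ)^((j-1)*3) • T2 1 j)
            - (-1:ℤ)^(p-1) • (∑ l ∈ Finset.Icc 1 2, (-1:ℤ)^((l-1)*(p+1)) • T4 1 l))
          + (-1:ℤ)^((2-1)*(p+2)) • ((∑ j ∈ Finset.Icc 1 p, (-1:ℤ)^((j-1)*3) • T2 2 j)
            - (-1:ℤ)^(p-1) • (∑ l ∈ Finset.Icc 1 2, (-1:ℤ)^((l-1)*(p+1)) • T4 2 l))) = 0 := by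
  simp only [sum_Icc_one_two]
  simp only [smul_sub, smul_add, Finset.smul_sum, smul_smul, ← pow_add]
  rw [Finset.sum_sub_distrib, Finset.sum_add_distrib]
  have e1 : ∑ x ∈ Finset.Icc 1 (p + 1), ∑ x1 ∈ Finset.Icc 1 p,
      (-1:ℤ) ^ ((x - 1) * 3 + (x1 - 1) * 3) • T1 x x1 = 0 := by
    rw [← Finset.sum_product']
    rw [← keyA p T1 h11 h12]
    refine Finset.sum_congr rfl fun x hxx => ?_
    simp only [Finset.mem_product, Finset.mem_Icc] at hxx
    exact smul_pow_parity (by omega) _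
  have e2 : ∑ x ∈ Finset.Icc 1 (p + 1), (-1:ℤ) ^ ((x - 1) * 3 + (p - 1 + (1 - 1) * (p + 1))) • T3 1 x
      = (∑ x ∈ Finset.Icc 1 p, (-1:ℤ) ^ (p + x) • T2 1 x) - T4 1 1 := by
    rw [Finset.sum_Icc_succ_top (by omega : 1 ≤ p + 1), sub_eq_add_neg]
    congr 1
    · refine Finset.sum_congr rfl fun x hxx => ?_
      have hb := Finset.mem_Icc.mp hxx
      rw [h23 x hb.1 hb.2]
      exact smul_pow_parity (by omega) _
    · rw [hx1, smul_pow_parity (e' := 1) (by omega), pow_one, neg_one_zsmul]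
  have e3 : ∑ x ∈ Finset.Icc 1 (p + 1), (-1:ℤ) ^ ((x - 1) * 3 + (p - 1 + (2 - 1) * (p + 1))) • T3 2 x
      = (∑ x ∈ Finset.Icc 1 p, (-1:ℤ) ^ x • T2 2 x) + T4 2 2 := by
    have hins : Finset.Icc 1 (p + 1) = insert 1 (Finset.Icc 2 (p + 1)) := by
      ext t; simp [Finset.mem_Icc]; omega
    rw [hins, Finset.sum_insert (by simp)]
    rw [smul_pow_parity (e' := 0) (by omega), pow_zero, one_zsmul, hy, add_comm]
    congr 1
    have hmap : Finset.Icc 2 (p + 1) = (Finset.Icc 1 p).map (addRightEmbedding 1) := by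
      rw [Finset.map_add_right_Icc]
    rw [hmap, Finset.sum_map]
    refine Finset.sum_congr rfl fun x hxx => ?_
    have hb := Finset.mem_Icc.mp hxx
    simp only [addRightEmbedding_apply]
    rw [h23' x hb.1 hb.2]
    exact smul_pow_parity (by omega) _
  have e4 : ∑ x ∈ Finset.Icc 1 p, (-1:ℤ) ^ (p + ((1 - 1) * (p + 2) + (x - 1) * 3)) • T2 1 x
      = - ∑ x ∈ Finset.Icc 1 p, (-1:ℤ) ^ (p + x) • T2 1 x := by
    rw [← Finset.sum_neg_distrib]
    refine Finset.sum_congr rfl fun x hxx => ?_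
    have hb := Finset.mem_Icc.mp hxx
    rw [smul_pow_parity (e' := p + x + 1) (by omega), pow_succ]
    rw [mul_smul, neg_one_zsmul, smul_neg]
  have e5 : ∑ x ∈ Finset.Icc 1 p, (-1:ℤ) ^ (p + ((2 - 1) * (p + 2) + (x - 1) * 3)) • T2 2 x
      = - ∑ x ∈ Finset.Icc 1 p, (-1:ℤ) ^ x • T2 2 x := by
    rw [← Finset.sum_neg_distrib]
    refine Finset.sum_congr rfl fun x hxx => ?_
    have hb := Finset.mem_Icc.mp hxx
    rw [smul_pow_parity (e' := x + 1) (by omega), pow_succ]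
    rw [mul_smul, neg_one_zsmul, smul_neg]
  have s1 : ((-1:ℤ)) ^ (p + ((1 - 1) * (p + 2) + (p - 1 + (1 - 1) * (p + 1)))) • T4 1 1
      = - T4 1 1 := by
    rw [smul_pow_parity (e' := 1) (by omega), pow_one, neg_one_zsmul]
  have s2 : ((-1:ℤ)) ^ (p + ((1 - 1) * (p + 2) + (p - 1 + (2 - 1) * (p + 1)))) • T4 1 2
      = (-1:ℤ) ^ p • T4 2 1 := by
    rw [hz]; exact smul_pow_parity (by omega) _
  have s3 : ((-1:ℤ)) ^ (p + ((2 - 1) * (p + 2) + (p - 1 + (1 - 1) * (p + 1)))) • T4 2 1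
      = - ((-1:ℤ) ^ p • T4 2 1) := by
    rw [smul_pow_parity (e' := p + 1) (by omega), pow_succ, mul_smul, neg_one_zsmul, smul_neg]
  have s4 : ((-1:ℤ)) ^ (p + ((2 - 1) * (p + 2) + (p - 1 + (2 - 1) * (p + 1)))) • T4 2 2
      = T4 2 2 := by
    rw [smul_pow_parity (e' := 0) (by omega), pow_zero, one_zsmul]
  rw [e1, e2, e3, e4, e5, s1, s2, s3, s4]
  abel

/-- If the 2-cochain `μ` is associative, then
`∂f := f∘μ − (−1)^{p−1} μ∘f` is a differential: `∂(∂f) = 0` for every `p`-cochain `f`. -/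
theorem hdel_hdel_eq_zero {R A : Type*} [CommRing R] [AddCommGroup A] [Module R A]
    {p : ℕ} (hp : 1 ≤ p)
    (μ : MultilinearMap R (fun _ : Fin 2 => A) A)
    (hassoc : ∀ a b c : A, μ ![μ ![a, b], c] = μ ![a, μ ![b, c]])
    (f : MultilinearMap R (fun _ : Fin p => A) A) :
    hdel (show 1 ≤ p + 1 by omega) (⇑μ) (hdel hp (⇑μ) (⇑f)) = 0 := by
  have hq2 : (1:ℕ) ≤ 2 := by omega
  have hmA : p + 1 + 1 = p + 2 := by omega
  have hmB : p + 1 + 1 = 2 + p := by omega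
  have hNA : p + 1 + 1 + 1 = p + 1 + 2 := by omega
  have hNB : p + 1 + 1 + 1 = 2 + (p + 1) := by omega
  have hp1 : 1 ≤ p + 1 := by omega
  have h34 : (3:ℕ) + 1 = 2 + 2 := by omega
  have h13 : (1:ℕ) ≤ 3 := by omega
  have hn3 : p + 1 + 1 + 1 = p + 3 := by omega
  have hn3' : p + 1 + 1 + 1 = 3 + p := by omega
  have hms : pcomp hq2 h34 (⇑μ) (⇑μ) 1 = pcomp hq2 h34 (⇑μ) (⇑μ) 2 := massoc μ hassoc hq2 h34
  funext a
  -- the four families of atoms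
  set T1f : ℕ → ℕ → A := fun i j =>
    pcomp hq2 hNA (pcomp hq2 hmA (⇑f) (⇑μ) j) (⇑μ) i a with hT1f
  set T2f : ℕ → ℕ → A := fun k j =>
    pcomp hp1 hNB (⇑μ) (pcomp hq2 hmA (⇑f) (⇑μ) j) k a with hT2f
  set T3f : ℕ → ℕ → A := fun k i =>
    pcomp hq2 hNA (pcomp hp hmB (⇑μ) (⇑f) k) (⇑μ) i a with hT3f
  set T4f : ℕ → ℕ → A := fun k l =>
    pcomp hp1 hNB (⇑μ) (pcomp hp hmB (⇑μ) (⇑f) l) k a with hT4f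
  -- the composition identities
  have h11 : ∀ i j, 1 ≤ i → i < j → j ≤ p → T1f i j = T1f (j+1) i := by
    intro i j h1 h2 h3
    have := pcomp_pcomp_of_lt hq2 hq2 hmA hNA hmA hNA (⇑f) (⇑μ) (⇑μ) h1 h2 h3
    exact congrFun this a
  have h12 : ∀ j, 1 ≤ j → j ≤ p → T1f j j = T1f (j+1) j := by
    intro j h1 h3
    have s1 := pcomp_pcomp_nested hq2 hq2 h13 hmA hNA h34 hn3 (⇑f) (⇑μ) (⇑μ)
      (i := j) (j := j) h1 (le_refl j) (by omega) h3
    rw [show j - j + 1 = 1 by omega] at s1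
    have s2 := pcomp_pcomp_nested hq2 hq2 h13 hmA hNA h34 hn3 (⇑f) (⇑μ) (⇑μ)
      (i := j + 1) (j := j) h1 (by omega) (by omega) h3
    rw [show j + 1 - j + 1 = 2 by omega] at s2
    have : T1f j j = T1f (j+1) j := by
      show pcomp hq2 hNA (pcomp hq2 hmA (⇑f) (⇑μ) j) (⇑μ) j a = _
      rw [congrFun s1 a, hms, ← congrFun s2 a]
    exact this
  have h23 : ∀ i, 1 ≤ i → i ≤ p → T3f 1 i = T2f 1 i := by
    intro i h1 h3
    have s1 := pcomp_pcomp_nested hp hq2 hp1 hmB hNA hmA hNB (⇑μ) (⇑f) (⇑μ)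
      (i := i) (j := 1) (le_refl 1) h1 (by omega) hq2
    rw [show i - 1 + 1 = i by omega] at s1
    exact congrFun s1 a
  have h23' : ∀ i, 1 ≤ i → i ≤ p → T3f 2 (i+1) = T2f 2 i := by
    intro i h1 h3
    have s1 := pcomp_pcomp_nested hp hq2 hp1 hmB hNA hmA hNB (⇑μ) (⇑f) (⇑μ)
      (i := i + 1) (j := 2) hq2 (by omega) (by omega) (le_refl 2)
    rw [show i + 1 - 2 + 1 = i by omega] at s1
    exact congrFun s1 a
  have hx1 : T3f 1 (p+1) = T4f 1 1 := by
    have s1 := pcomp_pcomp_of_lt hq2 hp h34 hn3' hmB hNA (⇑μ) (⇑μ) (⇑f)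
      (i := 1) (j := 2) (le_refl 1) (by omega) (le_refl 2)
    rw [show 2 + p - 1 = p + 1 by omega] at s1
    have s2 := pcomp_pcomp_nested hq2 hp hp1 h34 hn3' hmB hNB (⇑μ) (⇑μ) (⇑f)
      (i := 1) (j := 1) (le_refl 1) (le_refl 1) (by omega) hq2
    rw [show 1 - 1 + 1 = 1 by omega] at s2
    calc T3f 1 (p+1) = pcomp hp hn3' (pcomp hq2 h34 (⇑μ) (⇑μ) 2) (⇑f) 1 a :=
          (congrFun s1 a).symm
      _ = pcomp hp hn3' (pcomp hq2 h34 (⇑μ) (⇑μ) 1) (⇑f) 1 a := by rw [hms]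
      _ = T4f 1 1 := congrFun s2 a
  have hy : T3f 2 1 = T4f 2 2 := by
    have s1 := pcomp_pcomp_of_lt hp hq2 hmB hNA h34 hn3' (⇑μ) (⇑f) (⇑μ)
      (i := 1) (j := 2) (le_refl 1) (by omega) (le_refl 2)
    have s2 := pcomp_pcomp_nested hq2 hp hp1 h34 hn3' hmB hNB (⇑μ) (⇑μ) (⇑f)
      (i := 3) (j := 2) hq2 (by omega) (by omega) (le_refl 2)
    rw [show 3 - 2 + 1 = 2 by omega] at s2
    calc T3f 2 1 = pcomp hp hn3' (pcomp hq2 h34 (⇑μ) (⇑μ) 1) (⇑f) (2 + 2 - 1) a :=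
          congrFun s1 a
      _ = pcomp hp hn3' (pcomp hq2 h34 (⇑μ) (⇑μ) 2) (⇑f) 3 a := by rw [hms]
      _ = T4f 2 2 := congrFun s2 a
  have hz : T4f 1 2 = T4f 2 1 := by
    have s1 := pcomp_pcomp_nested hq2 hp hp1 h34 hn3' hmB hNB (⇑μ) (⇑μ) (⇑f)
      (i := 2) (j := 1) (le_refl 1) (by omega) (by omega) hq2
    rw [show 2 - 1 + 1 = 2 by omega] at s1
    have s2 := pcomp_pcomp_nested hq2 hp hp1 h34 hn3' hmB hNB (⇑μ) (⇑μ) (⇑f)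
      (i := 2) (j := 2) hq2 (le_refl 2) (by omega) (le_refl 2)
    rw [show 2 - 2 + 1 = 1 by omega] at s2
    calc T4f 1 2 = pcomp hp hn3' (pcomp hq2 h34 (⇑μ) (⇑μ) 1) (⇑f) 2 a :=
          (congrFun s1 a).symm
      _ = pcomp hp hn3' (pcomp hq2 h34 (⇑μ) (⇑μ) 2) (⇑f) 2 a := by rw [hms]
      _ = T4f 2 1 := congrFun s2 a
  -- expansion of the two μ∘(∂f) terms using multilinearity
  have hmu1 : ∀ g : (Fin (p+1) → A) → A, pcomp hp1 hNB (⇑μ) g 1 a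
      = muHomL μ (a ⟨p + 1, by omega⟩)
          (g (fun l => a ⟨l.val, by have := l.isLt; omega⟩)) :=
    fun g => pcomp_mu_one μ hp1 hNB g a
  have hmu2 : ∀ g : (Fin (p+1) → A) → A, pcomp hp1 hNB (⇑μ) g 2 a
      = muHomR μ (a ⟨0, by omega⟩)
          (g (fun l => a ⟨1 + l.val, by have := l.isLt; omega⟩)) :=
    fun g => pcomp_mu_two μ hp1 hNB g a
  have ex1 : pcomp hp1 hNB (⇑μ) (hdel hp (⇑μ) (⇑f)) 1 a
      = (∑ j ∈ Finset.Icc 1 p, (-1:ℤ)^((j-1)*3) • T2f 1 j)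
        - (-1:ℤ)^(p-1) • (∑ l ∈ Finset.Icc 1 2, (-1:ℤ)^((l-1)*(p+1)) • T4f 1 l) := by
    rw [hmu1]
    rw [show (hdel hp (⇑μ) (⇑f)) (fun l : Fin (p+1) => a ⟨l.val, by have := l.isLt; omega⟩)
        = (∑ j ∈ Finset.Icc 1 p, (-1:ℤ)^((j-1)*3) •
            pcomp hq2 hmA (⇑f) (⇑μ) j (fun l : Fin (p+1) => a ⟨l.val, by have := l.isLt; omega⟩))
          - (-1:ℤ)^(p-1) • (∑ l ∈ Finset.Icc 1 2, (-1:ℤ)^((l-1)*(p+1)) •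
            pcomp hp hmB (⇑μ) (⇑f) l (fun l : Fin (p+1) => a ⟨l.val, by have := l.isLt; omega⟩))
        from rfl]
    simp only [map_sub, map_zsmul, map_sum]
    congr 1
    · refine Finset.sum_congr rfl fun j _ => ?_
      rw [← hmu1 (pcomp hq2 hmA (⇑f) (⇑μ) j)]
    · congr 1
      refine Finset.sum_congr rfl fun l _ => ?_
      rw [← hmu1 (pcomp hp hmB (⇑μ) (⇑f) l)]
  have ex2 : pcomp hp1 hNB (⇑μ) (hdel hp (⇑μ) (⇑f)) 2 a
      = (∑ j ∈ Finset.Icc 1 p, (-1:ℤ)^((j-1)*3) • T2f 2 j)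
        - (-1:ℤ)^(p-1) • (∑ l ∈ Finset.Icc 1 2, (-1:ℤ)^((l-1)*(p+1)) • T4f 2 l) := by
    rw [hmu2]
    rw [show (hdel hp (⇑μ) (⇑f)) (fun l : Fin (p+1) => a ⟨1 + l.val, by have := l.isLt; omega⟩)
        = (∑ j ∈ Finset.Icc 1 p, (-1:ℤ)^((j-1)*3) •
            pcomp hq2 hmA (⇑f) (⇑μ) j (fun l : Fin (p+1) => a ⟨1 + l.val, by have := l.isLt; omega⟩))
          - (-1:ℤ)^(p-1) • (∑ l ∈ Finset.Icc 1 2, (-1:ℤ)^((l-1)*(p+1)) •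
            pcomp hp hmB (⇑μ) (⇑f) l (fun l : Fin (p+1) => a ⟨1 + l.val, by have := l.isLt; omega⟩))
        from rfl]
    simp only [map_sub, map_zsmul, map_sum]
    congr 1
    · refine Finset.sum_congr rfl fun j _ => ?_
      rw [← hmu2 (pcomp hq2 hmA (⇑f) (⇑μ) j)]
    · congr 1
      refine Finset.sum_congr rfl fun l _ => ?_
      rw [← hmu2 (pcomp hp hmB (⇑μ) (⇑f) l)]
  show (∑ i ∈ Finset.Icc 1 (p+1), (-1:ℤ)^((i-1)*3) •
        ((∑ j ∈ Finset.Icc 1 p, (-1:ℤ)^((j-1)*3) • T1f i j)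
          - (-1:ℤ)^(p-1) • (∑ k ∈ Finset.Icc 1 2, (-1:ℤ)^((k-1)*(p+1)) • T3f k i)))
      - (-1:ℤ)^p • (∑ k ∈ Finset.Icc 1 2, (-1:ℤ)^((k-1)*(p+2)) •
          pcomp hp1 hNB (⇑μ) (hdel hp (⇑μ) (⇑f)) k a) = 0
  rw [sum_Icc_one_two (fun k => (-1:ℤ)^((k-1)*(p+2)) • pcomp hp1 hNB (⇑μ) (hdel hp (⇑μ) (⇑f)) k a)]
  rw [ex1, ex2]
  exact key p hp T1f T2f T3f T4f h11 h12 h23 h23' hx1 hy hz
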